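/- The function f(x) = x·ln(1 − e^{−x}) on (0,∞) attains its infimum at x = ln 2, and inf_{x>0} x·ln(1−e^{−x}) = −ln²2. -/

import Mathlib

/-- `exp(-log 2) = 1/2`. -/
lemma aux0 : Real.exp (-Real.log 2) = 1/2 := by
  rw [Real.exp_neg, Real.exp_log (by norm_num : (0:ℝ) < 2)]; norm_num

/-- `(1-u)·log(1-u) > -u` for `u ∈ (0,1)`. -/
lemma aux1 {u : ℝ} (h0 : 0 < u) (h1 : u < 1) : -u < (1 - u) * Real.log (1 - u) := by
  have h1u : 0 < 1 - u := by linarith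
  have hne : (1 - u)⁻¹ ≠ 1 := by
    intro h
    have : (1 - u) = 1 := by field_simp at h; linarith
    linarith
  have := Real.log_lt_sub_one_of_pos (by positivity : (0:ℝ) < (1-u)⁻¹) hne
  rw [Real.log_inv] at this
  have h2 : (1 - u) * (1 - u)⁻¹ = 1 := mul_inv_cancel₀ (ne_of_gt h1u)
  nlinarith [mul_pos h1u h1u]

/-- `t ↦ -(t·log t)` is strictly antitone on `[e⁻¹, 1]`. -/
lemma aux2 : StrictAntiOn (fun t : ℝ => -(t * Real.log t)) (Set.Icc (Real.exp (-1)) 1) := by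
  apply strictAntiOn_of_deriv_neg (convex_Icc _ _)
  · apply ContinuousOn.neg
    exact continuousOn_id.mul (Real.continuousOn_log.mono (by
      intro t ht
      simp only [Set.mem_Icc] at ht
      have := Real.exp_pos (-1:ℝ)
      simp only [Set.mem_compl_iff, Set.mem_singleton_iff]
      intro h; rw [h] at ht; linarith [ht.1]))
  · intro t ht
    rw [interior_Icc] at ht
    have ht0 : 0 < t := lt_trans (Real.exp_pos _) ht.1
    have hd : HasDerivAt (fun t : ℝ => -(t * Real.log t)) (-(Real.log t + 1)) t :=
      (Real.hasDerivAt_mul_log (ne_of_gt ht0)).neg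
    rw [hd.deriv]
    have : -1 < Real.log t := by
      rw [show (-1:ℝ) = Real.log (Real.exp (-1)) by rw [Real.log_exp]]
      exact Real.log_lt_log (Real.exp_pos _) ht.1
    linarith

/-- `ψ(u) > 0` on `(0, 1/2)`: `u·log u < (1-u)·log(1-u)`. -/
lemma aux3 {u : ℝ} (h0 : 0 < u) (h1 : u < 1/2) :
    u * Real.log u < (1 - u) * Real.log (1 - u) := by
  rcases le_or_gt u (Real.exp (-1)) with h | h
  · have hlogu : Real.log u ≤ -1 := by
      rw [show (-1:ℝ) = Real.log (Real.exp (-1)) by rw [Real.log_exp]]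
      exact Real.log_le_log h0 h
    have h2 : u * Real.log u ≤ -u := by nlinarith
    exact lt_of_le_of_lt h2 (aux1 h0 (by linarith))
  · have he : Real.exp (-1) < 1/2 := by
      have h2 : Real.log 2 < 1 := by
        have := Real.log_lt_sub_one_of_pos (by norm_num : (0:ℝ) < 2) (by norm_num)
        linarith
      calc Real.exp (-1) < Real.exp (-Real.log 2) := Real.exp_lt_exp.2 (by linarith)
        _ = 1/2 := aux0
    have hu1 : u ∈ Set.Icc (Real.exp (-1)) 1 := ⟨le_of_lt h, by linarith⟩
    have hu2 : (1 - u) ∈ Set.Icc (Real.exp (-1)) 1 := ⟨by linarith, by linarith⟩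
    have := aux2 hu1 hu2 (by linarith : u < 1 - u)
    simp only at this
    linarith

/-- Derivative of `f` at `x > 0`. -/
lemma aux4 {x : ℝ} (hx : 0 < x) :
    HasDerivAt (fun x : ℝ => x * Real.log (1 - Real.exp (-x)))
      (Real.log (1 - Real.exp (-x)) + x * (Real.exp (-x) / (1 - Real.exp (-x)))) x := by
  have hu1 : Real.exp (-x) < 1 := Real.exp_lt_one_iff.2 (by linarith)
  have h2 : HasDerivAt (fun x : ℝ => Real.exp (-x)) (-Real.exp (-x)) x := by
    simpa using ((hasDerivAt_id x).neg).exp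
  have h3 : HasDerivAt (fun x : ℝ => 1 - Real.exp (-x)) (Real.exp (-x)) x := by
    exact ((hasDerivAt_const x (1:ℝ)).sub h2).congr_deriv (by ring)
  have h4 : HasDerivAt (fun x : ℝ => Real.log (1 - Real.exp (-x)))
      (Real.exp (-x) / (1 - Real.exp (-x))) x := h3.log (by linarith)
  exact ((hasDerivAt_id x).mul h4).congr_deriv (by simp)

/-- Sign of the derivative. -/
lemma aux5 {x : ℝ} (hx : 0 < x) :
    (Real.log 2 < x → 0 < Real.log (1 - Real.exp (-x)) + x * (Real.exp (-x) / (1 - Real.exp (-x)))) ∧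
    (x < Real.log 2 → Real.log (1 - Real.exp (-x)) + x * (Real.exp (-x) / (1 - Real.exp (-x))) < 0) := by
  set u := Real.exp (-x) with hu
  have hu0 : 0 < u := Real.exp_pos _
  have hu1 : u < 1 := Real.exp_lt_one_iff.2 (by linarith)
  have h1u : 0 < 1 - u := by linarith
  have hxu : x = -Real.log u := by rw [hu, Real.log_exp]; ring
  have hkey : Real.log (1 - u) + x * (u / (1 - u)) =
      ((1 - u) * Real.log (1 - u) - u * Real.log u) / (1 - u) := by
    rw [hxu]; field_simp; ring
  constructor
  · intro hlt
    have hu2 : u < 1/2 := by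
      calc u < Real.exp (-Real.log 2) := by rw [hu]; exact Real.exp_lt_exp.2 (by linarith)
        _ = 1/2 := aux0
    have := aux3 hu0 hu2
    rw [hkey]
    exact div_pos (by linarith) h1u
  · intro hlt
    have hu2 : 1/2 < u := by
      calc (1:ℝ)/2 = Real.exp (-Real.log 2) := aux0.symm
        _ < u := by rw [hu]; exact Real.exp_lt_exp.2 (by linarith)
    have hv := aux3 (u := 1 - u) (by linarith) (by linarith)
    have hsimp : 1 - (1 - u) = u := by ring
    rw [hsimp] at hv
    rw [hkey]
    exact div_neg_of_neg_of_pos (by linarith) h1u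

/-- `log 2 > 0`. -/
lemma aux6 : 0 < Real.log 2 := Real.log_pos (by norm_num)

/-- Continuity of `f` on any interval `[a,b]` with `a > 0`. -/
lemma aux7 {a b : ℝ} (ha : 0 < a) :
    ContinuousOn (fun x : ℝ => x * Real.log (1 - Real.exp (-x))) (Set.Icc a b) := by
  apply continuousOn_id.mul
  apply ContinuousOn.log
  · exact (continuous_const.sub (Real.continuous_exp.comp continuous_neg)).continuousOn
  · intro x hx
    simp only [Set.mem_Icc] at hx
    have : Real.exp (-x) < 1 := Real.exp_lt_one_iff.2 (by linarith [hx.1])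
    intro h; linarith

/-- Value at `log 2`. -/
lemma aux8 : Real.log 2 * Real.log (1 - Real.exp (-Real.log 2)) = -(Real.log 2) ^ 2 := by
  rw [aux0]
  norm_num
  rw [show (1:ℝ)/2 = 2⁻¹ by norm_num, Real.log_inv]
  ring

/-- Lower bound. -/
lemma aux9 {x : ℝ} (hx : 0 < x) :
    -(Real.log 2) ^ 2 ≤ x * Real.log (1 - Real.exp (-x)) := by
  set f : ℝ → ℝ := fun x => x * Real.log (1 - Real.exp (-x)) with hf
  have hval : f (Real.log 2) = -(Real.log 2) ^ 2 := aux8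
  rcases lt_trichotomy x (Real.log 2) with h | h | h
  · -- f strictly anti on [x, log 2]
    have hanti : StrictAntiOn f (Set.Icc x (Real.log 2)) := by
      apply strictAntiOn_of_deriv_neg (convex_Icc _ _) (aux7 hx)
      intro t ht
      rw [interior_Icc] at ht
      have ht0 : 0 < t := lt_trans hx ht.1
      rw [(aux4 ht0).deriv]
      exact (aux5 ht0).2 ht.2
    have := hanti (Set.mem_Icc.2 ⟨le_refl x, le_of_lt h⟩)
      (Set.mem_Icc.2 ⟨le_of_lt h, le_refl _⟩) h
    rw [hval] at this; exact le_of_lt this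
  · rw [← hval, h]
  · have hmono : StrictMonoOn f (Set.Icc (Real.log 2) x) := by
      apply strictMonoOn_of_deriv_pos (convex_Icc _ _) (aux7 aux6)
      intro t ht
      rw [interior_Icc] at ht
      have ht0 : 0 < t := lt_trans aux6 ht.1
      rw [(aux4 ht0).deriv]
      exact (aux5 ht0).1 ht.1
    have := hmono (Set.mem_Icc.2 ⟨le_refl _, le_of_lt h⟩)
      (Set.mem_Icc.2 ⟨le_of_lt h, le_refl x⟩) h
    rw [hval] at this; exact le_of_lt this

/-- The function `f(x) = x·ln(1 − e^{−x})` on `(0,∞)` attains its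
infimum at `x = ln 2`, and the infimum equals `−(ln 2)²`. -/
theorem stmt16 :
    IsLeast {y : ℝ | ∃ x : ℝ, 0 < x ∧ y = x * Real.log (1 - Real.exp (-x))}
      (-(Real.log 2) ^ 2) ∧
    Real.log 2 * Real.log (1 - Real.exp (-Real.log 2)) = -(Real.log 2) ^ 2 := by
  refine ⟨⟨⟨Real.log 2, aux6, aux8.symm⟩, ?_⟩, aux8⟩
  rintro y ⟨x, hx, rfl⟩
  exact aux9 hx
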